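/- For 0 < β ≤ 1 and λ > 0, the n-th moment of the fractional Poisson measure is m_{λ,β}(n) = Σ_{k=0}^∞ k^n (λ^k/k!) E_β^{(k)}(-λ) = Σ_{m=0}^n m!/Γ(mβ+1) · S(n,m) λ^m, where S(n,m) are the Stirling numbers of the second kind. -/

import Mathlib

/-- The Mittag-Leffler function `E_β(z) = ∑ zⁿ / Γ(βn+1)`. -/
noncomputable def mittagLeffler (β : ℝ) (z : ℂ) : ℂ :=
  ∑' n : ℕ, z ^ n / Complex.Gamma ((β * n + 1 : ℝ) : ℂ)

/-- Stirling numbers of the second kind. -/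
def stirling2 : ℕ → ℕ → ℕ
  | 0, 0 => 1
  | 0, _ + 1 => 0
  | _ + 1, 0 => 0
  | n + 1, k + 1 => (k + 1) * stirling2 n (k + 1) + stirling2 n k

lemma stirling2_zero_of_lt : ∀ {n m : ℕ}, n < m → stirling2 n m = 0
  | 0, m+1, _ => rfl
  | n+1, m+1, h => by
      have h1 : n < m + 1 := Nat.lt_of_succ_lt_succ (Nat.lt_succ_of_lt h)
      have h2 : n < m := Nat.lt_of_succ_lt_succ h
      simp [stirling2, stirling2_zero_of_lt h1, stirling2_zero_of_lt h2]

-- i * descFactorial i m = descFactorial i (m+1) + m * descFactorial i m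
lemma mul_descFactorial (i m : ℕ) :
    i * i.descFactorial m = i.descFactorial (m + 1) + m * i.descFactorial m := by
  rcases le_or_gt m i with h | h
  · rw [Nat.descFactorial_succ, Nat.sub_mul, Nat.sub_add_cancel (Nat.mul_le_mul_right _ h)]
  · rw [Nat.descFactorial_eq_zero_iff_lt.2 h, Nat.descFactorial_eq_zero_iff_lt.2 (Nat.lt_succ_of_lt h)]
    simp

lemma pow_eq_sum_stirling2 (n i : ℕ) :
    i ^ n = ∑ m ∈ Finset.range (n + 1), stirling2 n m * i.descFactorial m := by
  induction n with
  | zero => simp [stirling2]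
  | succ n ih =>
    have key : ∀ m : ℕ, stirling2 (n+1) (m+1) = (m+1) * stirling2 n (m+1) + stirling2 n m :=
      fun m => rfl
    have e1 : ∀ m ∈ Finset.range (n+1), stirling2 n m * i.descFactorial m * i
        = stirling2 n m * i.descFactorial (m+1) + m * stirling2 n m * i.descFactorial m := by
      intro m _
      rw [mul_assoc, mul_comm (i.descFactorial m) i, mul_descFactorial, Nat.mul_add]
      ring
    have hB : ∑ m ∈ Finset.range (n+1), m * stirling2 n m * i.descFactorial m
        = ∑ m ∈ Finset.range (n+1), (m+1) * stirling2 n (m+1) * i.descFactorial (m+1) := by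
      have h2 : ∑ m ∈ Finset.range (n+2), m * stirling2 n m * i.descFactorial m
          = ∑ m ∈ Finset.range (n+1), m * stirling2 n m * i.descFactorial m := by
        rw [Finset.sum_range_succ, stirling2_zero_of_lt (Nat.lt_succ_self n)]; simp
      rw [← h2, Finset.sum_range_succ' (fun m => m * stirling2 n m * i.descFactorial m) (n+1)]
      simp
    calc i ^ (n+1) = ∑ m ∈ Finset.range (n+1), stirling2 n m * i.descFactorial m * i := by
          rw [pow_succ, ih, Finset.sum_mul]
      _ = ∑ m ∈ Finset.range (n+1), (stirling2 n m * i.descFactorial (m+1)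
            + m * stirling2 n m * i.descFactorial m) := Finset.sum_congr rfl e1
      _ = ∑ m ∈ Finset.range (n+1), stirling2 n m * i.descFactorial (m+1)
            + ∑ m ∈ Finset.range (n+1), (m+1) * stirling2 n (m+1) * i.descFactorial (m+1) := by
          rw [Finset.sum_add_distrib, hB]
      _ = ∑ m ∈ Finset.range (n+1), stirling2 (n+1) (m+1) * i.descFactorial (m+1) := by
          rw [← Finset.sum_add_distrib]
          refine Finset.sum_congr rfl fun m _ => ?_
          rw [key, Nat.add_mul]
          ring
      _ = ∑ m ∈ Finset.range (n+1+1), stirling2 (n+1) m * i.descFactorial m := by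
          rw [Finset.sum_range_succ' (fun m => stirling2 (n+1) m * i.descFactorial m) (n+1)]
          simp [stirling2]

lemma sum_desc_binom (k m : ℕ) (hk : k ≤ m) (X Y : ℂ) :
    ∑ i ∈ Finset.range (m+1), (i.descFactorial k : ℂ) * (m.choose i : ℂ) * X^i * Y^(m-i)
      = (m.descFactorial k : ℂ) * X^k * (X+Y)^(m-k) := by
  have hsplit : m + 1 = k + (m - k + 1) := by omega
  rw [hsplit, Finset.sum_range_add]
  have h1 : ∑ i ∈ Finset.range k,
      (i.descFactorial k : ℂ) * (m.choose i : ℂ) * X^i * Y^(m-i) = 0 := by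
    refine Finset.sum_eq_zero fun i hi => ?_
    rw [Nat.descFactorial_eq_zero_iff_lt.2 (Finset.mem_range.1 hi)]
    simp
  rw [h1, zero_add, add_pow, Finset.mul_sum]
  refine Finset.sum_congr rfl fun i hi => ?_
  have hi' : i ≤ m - k := Nat.lt_succ_iff.1 (Finset.mem_range.1 hi)
  have hkm : k + i ≤ m := by omega
  have hnat : (k+i).descFactorial k * m.choose (k+i) = m.descFactorial k * (m-k).choose i := by
    rw [Nat.descFactorial_eq_factorial_mul_choose, Nat.descFactorial_eq_factorial_mul_choose,
      Nat.mul_assoc, Nat.mul_assoc]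
    congr 1
    rw [Nat.mul_comm, Nat.choose_mul (Nat.le_add_right k i), Nat.add_sub_cancel_left]
  have hc : ((k+i).descFactorial k : ℂ) * (m.choose (k+i) : ℂ)
      = (m.descFactorial k : ℂ) * ((m-k).choose i : ℂ) := by
    rw [← Nat.cast_mul, ← Nat.cast_mul, hnat]
  have hmk : m - (k + i) = m - k - i := by omega
  calc ((k+i).descFactorial k : ℂ) * (m.choose (k+i) : ℂ) * X^(k+i) * Y^(m-(k+i))
      = (((k+i).descFactorial k : ℂ) * (m.choose (k+i) : ℂ)) * (X^k * (X^i * Y^(m-k-i))) := by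
        rw [hmk, pow_add]; ring
    _ = (m.descFactorial k : ℂ) * X^k * (X^i * Y^(m-k-i) * ((m-k).choose i : ℂ)) := by
        rw [hc]; ring

lemma sum_desc_binom_neg (k m : ℕ) (X : ℂ) :
    ∑ i ∈ Finset.range (m+1), (i.descFactorial k : ℂ) * (m.choose i : ℂ) * X^i * (-X)^(m-i)
      = if k = m then (m.factorial : ℂ) * X^m else 0 := by
  rcases le_or_gt k m with hk | hk
  · rw [sum_desc_binom k m hk, add_neg_cancel, zero_pow_eq]
    rcases eq_or_lt_of_le hk with h | h
    · subst h; simp [Nat.descFactorial_self]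
    · rw [if_neg (by omega), if_neg (by omega)]; ring
  · rw [if_neg (by omega)]
    refine Finset.sum_eq_zero fun i hi => ?_
    have : i < k := by have := Finset.mem_range.1 hi; omega
    rw [Nat.descFactorial_eq_zero_iff_lt.2 this]
    simp

lemma sum_pow_binom_neg (n m : ℕ) (X : ℂ) :
    ∑ i ∈ Finset.range (m+1), (i:ℂ)^n * (m.choose i : ℂ) * X^i * (-X)^(m-i)
      = (stirling2 n m : ℂ) * (m.factorial : ℂ) * X^m := by
  have e1 : ∀ i ∈ Finset.range (m+1), (i:ℂ)^n * (m.choose i : ℂ) * X^i * (-X)^(m-i)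
      = ∑ m' ∈ Finset.range (n+1), (stirling2 n m' : ℂ) *
          ((i.descFactorial m' : ℂ) * (m.choose i : ℂ) * X^i * (-X)^(m-i)) := by
    intro i _
    have : (i:ℂ)^n = ((i^n : ℕ) : ℂ) := by push_cast; ring
    rw [this, pow_eq_sum_stirling2 n i]
    push_cast
    rw [Finset.sum_mul, Finset.sum_mul, Finset.sum_mul]
    refine Finset.sum_congr rfl fun m' _ => by ring
  rw [Finset.sum_congr rfl e1, Finset.sum_comm]
  have e2 : ∀ m' ∈ Finset.range (n+1),
      ∑ i ∈ Finset.range (m+1), (stirling2 n m' : ℂ) *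
        ((i.descFactorial m' : ℂ) * (m.choose i : ℂ) * X^i * (-X)^(m-i))
      = (stirling2 n m' : ℂ) * (if m' = m then (m.factorial : ℂ) * X^m else 0) := by
    intro m' _
    rw [← Finset.mul_sum, sum_desc_binom_neg]
  rw [Finset.sum_congr rfl e2]
  simp only [mul_ite, mul_zero]
  rw [Finset.sum_ite_eq' (Finset.range (n+1)) m
    (fun m' => (stirling2 n m' : ℂ) * ((m.factorial : ℂ) * X^m))]
  by_cases hm : m ∈ Finset.range (n+1)
  · rw [if_pos hm]; ring
  · rw [if_neg hm, stirling2_zero_of_lt (by simpa using Finset.mem_range.not.1 hm)]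
    simp


open Real

lemma gamma_bound {β : ℝ} (hβ : 0 < β) {t : ℝ} (ht1 : 1 ≤ t) {m : ℕ} (hm : 2 ≤ β * m) :
    t ^ (β * m) ≤ Real.exp t * t ^ (2:ℝ) * Real.Gamma (β * m + 1) := by
  have ht0 : 0 < t := lt_of_lt_of_le one_pos ht1
  set N : ℕ := ⌊β * m⌋₊ with hNdef
  have hβm : (0:ℝ) ≤ β * m := by linarith
  have hN2 : 2 ≤ N := Nat.le_floor (by exact_mod_cast hm)
  have hNle : (N:ℝ) ≤ β * m := Nat.floor_le hβm
  have hNgt : β * m < N + 1 := Nat.lt_floor_add_one _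
  have hΓmono : Real.Gamma (N:ℝ) ≤ Real.Gamma (β * m + 1) := by
    apply Real.Gamma_strictMonoOn_Ici.monotoneOn
    · exact Set.mem_Ici.2 (by exact_mod_cast hN2)
    · exact Set.mem_Ici.2 (by linarith)
    · linarith
  have hcast : (N:ℝ) = ((N-1:ℕ):ℝ) + 1 := by
    have : 1 ≤ N := by omega
    push_cast [this]; ring
  have hΓN : Real.Gamma (N:ℝ) = ((N-1).factorial : ℝ) := by
    rw [hcast]
    exact_mod_cast Real.Gamma_nat_eq_factorial (N-1)
  have hfac : t ^ (N-1) ≤ ((N-1).factorial : ℝ) * Real.exp t := by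
    have hsum := Real.sum_le_exp_of_nonneg ht0.le N
    have hmem : N - 1 ∈ Finset.range N := Finset.mem_range.2 (by omega)
    have hsingle : t ^ (N-1) / ((N-1).factorial : ℝ) ≤ Real.exp t := by
      refine le_trans (Finset.single_le_sum (f := fun i => t ^ i / (i.factorial : ℝ))
        (fun i _ => by positivity) hmem) hsum
    rw [div_le_iff₀ (by positivity)] at hsingle
    linarith [hsingle]
  have hexp : t ^ (β * m) ≤ t ^ (N-1) * t ^ (2:ℝ) := by
    have h1 : t ^ (β * m) = t ^ (β * m - 2) * t ^ (2:ℝ) := by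
      rw [← Real.rpow_add ht0]; ring_nf
    have h2 : t ^ (β * m - 2) ≤ t ^ (((N-1:ℕ)):ℝ) := by
      apply Real.rpow_le_rpow_of_exponent_le ht1
      have : ((N-1:ℕ):ℝ) = (N:ℝ) - 1 := by
        have : 1 ≤ N := by omega
        push_cast [this]; ring
      rw [this]; linarith
    rw [Real.rpow_natCast] at h2
    rw [h1]
    exact mul_le_mul_of_nonneg_right h2 (Real.rpow_pos_of_pos ht0 _).le
  calc t ^ (β * m) ≤ t ^ (N-1) * t ^ (2:ℝ) := hexp
    _ ≤ ((N-1).factorial : ℝ) * Real.exp t * t ^ (2:ℝ) := by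
        exact mul_le_mul_of_nonneg_right hfac (Real.rpow_pos_of_pos ht0 _).le
    _ ≤ Real.exp t * t ^ (2:ℝ) * Real.Gamma (β * m + 1) := by
        rw [hΓN] at hΓmono
        calc ((N-1).factorial : ℝ) * Real.exp t * t ^ (2:ℝ)
            = (Real.exp t * t ^ (2:ℝ)) * ((N-1).factorial : ℝ) := by ring
          _ ≤ (Real.exp t * t ^ (2:ℝ)) * Real.Gamma (β * m + 1) := by
              apply mul_le_mul_of_nonneg_left hΓmono
              positivity

lemma summable_cr_mul_pow {β : ℝ} (hβ : 0 < β) {R : ℝ} (hR : 0 ≤ R) :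
    Summable (fun m : ℕ => 1 / Real.Gamma (β * m + 1) * R ^ m) := by
  set t : ℝ := (2*R+2) ^ (1/β) with htdef
  have ht0 : 0 < t := rpow_pos_of_pos (by linarith) _
  have ht1 : 1 ≤ t := Real.one_le_rpow (by linarith) (by positivity)
  have htβ : t ^ β = 2*R+2 := by
    rw [htdef, ← Real.rpow_mul (by linarith), one_div_mul_cancel hβ.ne', Real.rpow_one]
  set M : ℕ := ⌈2/β⌉₊ with hMdef
  have hM : ∀ m : ℕ, 2 ≤ β * (m + M) := by
    intro m
    have h1 : 2/β ≤ (M:ℝ) := Nat.le_ceil _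
    rw [div_le_iff₀ hβ] at h1
    have : (M:ℝ) ≤ (m:ℕ) + M := by push_cast; linarith [Nat.cast_nonneg (α := ℝ) m]
    nlinarith [Nat.cast_nonneg (α := ℝ) m]
  have key : ∀ m : ℕ, 2 ≤ β * m →
      1 / Real.Gamma (β * m + 1) * R ^ m ≤ (Real.exp t * t ^ (2:ℝ)) * (1/2) ^ m := by
    intro m hm
    have hΓpos : 0 < Real.Gamma (β * m + 1) := Real.Gamma_pos_of_pos (by nlinarith)
    have hb := gamma_bound hβ ht1 hm
    have htm : (0:ℝ) < t ^ (β * m) := rpow_pos_of_pos ht0 _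
    have h1 : 1 / Real.Gamma (β * m + 1) ≤ Real.exp t * t ^ (2:ℝ) / t ^ (β * m) := by
      rw [div_le_div_iff₀ hΓpos (by positivity)]
      nlinarith
    have h2 : t ^ (β * m) = (2*R+2) ^ m := by
      rw [Real.rpow_mul ht0.le, htβ, Real.rpow_natCast]
    calc 1 / Real.Gamma (β * m + 1) * R ^ m
        ≤ (Real.exp t * t ^ (2:ℝ) / t ^ (β * m)) * R ^ m := by
          apply mul_le_mul_of_nonneg_right h1 (by positivity)
      _ = (Real.exp t * t ^ (2:ℝ)) * (R ^ m / (2*R+2) ^ m) := by rw [h2]; ring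
      _ = (Real.exp t * t ^ (2:ℝ)) * (R / (2*R+2)) ^ m := by rw [div_pow]
      _ ≤ (Real.exp t * t ^ (2:ℝ)) * (1/2) ^ m := by
          apply mul_le_mul_of_nonneg_left _ (by positivity)
          apply pow_le_pow_left₀ (by positivity)
          rw [div_le_div_iff₀ (by linarith) (by norm_num)]
          linarith
  rw [← summable_nat_add_iff M]
  apply Summable.of_nonneg_of_le
    (fun m => by
      have : 0 < Real.Gamma (β * (m + M : ℕ) + 1) := Real.Gamma_pos_of_pos (by nlinarith [hM m])
      positivity)
    (fun m => by
      have h := key (m + M) (by exact_mod_cast hM m)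
      calc 1 / Real.Gamma (β * (m + M : ℕ) + 1) * R ^ (m + M)
          ≤ (Real.exp t * t ^ (2:ℝ)) * (1/2) ^ (m + M) := by push_cast at h ⊢; convert h using 3
        _ ≤ (Real.exp t * t ^ (2:ℝ)) * (1/2) ^ m := by
            apply mul_le_mul_of_nonneg_left _ (by positivity)
            exact pow_le_pow_of_le_one (by norm_num) (by norm_num) (by omega))
  exact (summable_geometric_of_lt_one (by norm_num) (by norm_num)).mul_left _


open Finset in
noncomputable def mlCoeff (β : ℝ) (m : ℕ) : ℂ := 1 / Complex.Gamma ((β * m + 1 : ℝ) : ℂ)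

lemma norm_mlCoeff {β : ℝ} (hβ : 0 < β) (m : ℕ) :
    ‖mlCoeff β m‖ = 1 / Real.Gamma (β * m + 1) := by
  have hpos : 0 < Real.Gamma (β * m + 1) :=
    Real.Gamma_pos_of_pos (by positivity)
  rw [mlCoeff, Complex.Gamma_ofReal, ← Complex.ofReal_one, ← Complex.ofReal_div,
    Complex.norm_real, Real.norm_eq_abs, abs_of_pos (by positivity)]

section core
variable {β : ℝ}

lemma summable_norm_core (hβ : 0 < β) (w : ℕ → ℂ) {V : ℝ}
    (hw : ∀ m i : ℕ, i ≤ m → ‖w i‖ ≤ V ^ m) (x y : ℂ) :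
    Summable (fun p : ℕ × ℕ => ‖w p.1 * (((p.1+p.2).choose p.1 : ℕ) : ℂ) *
      mlCoeff β (p.1+p.2) * y^p.1 * x^p.2‖) := by
  classical
  have hV : 0 ≤ V := le_trans (norm_nonneg (w 0)) (by simpa using hw 1 0 (by omega))
  set F : ℕ × ℕ → ℝ := fun p => ‖w p.1 * (((p.1+p.2).choose p.1 : ℕ) : ℂ) *
      mlCoeff β (p.1+p.2) * y^p.1 * x^p.2‖ with hF
  have hFeq : ∀ p : ℕ × ℕ, F p = ‖w p.1‖ * ((p.1+p.2).choose p.1 : ℝ) *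
      (1 / Real.Gamma (β * (p.1+p.2) + 1)) * ‖y‖^p.1 * ‖x‖^p.2 := by
    intro p
    simp [hF, norm_mul, norm_pow, norm_mlCoeff hβ]
  rw [← (Finset.HasAntidiagonal.sigmaAntidiagonalEquivProd (A := ℕ)).summable_iff]
  have hnn : ∀ z : (Σ n : ℕ, (Finset.HasAntidiagonal.antidiagonal n : Finset (ℕ × ℕ))),
      0 ≤ (F ∘ ⇑(Finset.HasAntidiagonal.sigmaAntidiagonalEquivProd (A := ℕ))) z := fun z => norm_nonneg _
  rw [summable_sigma_of_nonneg hnn]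
  refine ⟨fun n => (hasSum_fintype _).summable, ?_⟩
  have hfiber : ∀ n : ℕ, ∑' (p : (Finset.HasAntidiagonal.antidiagonal n : Finset (ℕ × ℕ))),
      F ((Finset.HasAntidiagonal.sigmaAntidiagonalEquivProd (A := ℕ)) ⟨n, p⟩)
      ≤ 1 / Real.Gamma (β * n + 1) * (V * (‖y‖ + ‖x‖))^n := by
    intro n
    rw [tsum_fintype]
    have h1 : ∑ p ∈ (Finset.HasAntidiagonal.antidiagonal n).attach,
        F ((Finset.HasAntidiagonal.sigmaAntidiagonalEquivProd (A := ℕ)) ⟨n, p⟩)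
        = ∑ p ∈ Finset.HasAntidiagonal.antidiagonal n, F p := by
      rw [← Finset.sum_attach (Finset.HasAntidiagonal.antidiagonal n) F]
      rfl
    rw [show ∑ p : (Finset.HasAntidiagonal.antidiagonal n : Finset (ℕ × ℕ)),
        F ((Finset.HasAntidiagonal.sigmaAntidiagonalEquivProd (A := ℕ)) ⟨n, p⟩)
        = ∑ p ∈ (Finset.HasAntidiagonal.antidiagonal n).attach,
          F ((Finset.HasAntidiagonal.sigmaAntidiagonalEquivProd (A := ℕ)) ⟨n, p⟩) from rfl, h1]
    have h2 : ∀ p ∈ Finset.HasAntidiagonal.antidiagonal n,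
        F p ≤ (1 / Real.Gamma (β * n + 1)) * (V^n * ((n.choose p.1 : ℝ) * ‖y‖^p.1 * ‖x‖^p.2)) := by
      intro p hp
      have hpn : p.1 + p.2 = n := Finset.HasAntidiagonal.mem_antidiagonal.1 hp
      have hr : (p.1:ℝ) + (p.2:ℝ) = (n:ℝ) := by exact_mod_cast hpn
      rw [hFeq, hr, hpn]
      have hΓ : 0 < Real.Gamma (β * n + 1) := Real.Gamma_pos_of_pos (by positivity)
      have hwb : ‖w p.1‖ ≤ V ^ n := hw n p.1 (by omega)
      have : ‖w p.1‖ * (n.choose p.1 : ℝ) * (1 / Real.Gamma (β * n + 1)) * ‖y‖^p.1 * ‖x‖^p.2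
          ≤ V^n * (n.choose p.1 : ℝ) * (1 / Real.Gamma (β * n + 1)) * ‖y‖^p.1 * ‖x‖^p.2 := by
        have hnn : (0:ℝ) ≤ (n.choose p.1 : ℝ) * (1 / Real.Gamma (β * n + 1)) * ‖y‖^p.1 * ‖x‖^p.2 := by
          positivity
        nlinarith [hwb, hnn]
      calc ‖w p.1‖ * (n.choose p.1 : ℝ) * (1 / Real.Gamma (β * n + 1)) * ‖y‖^p.1 * ‖x‖^p.2
          ≤ V^n * (n.choose p.1 : ℝ) * (1 / Real.Gamma (β * n + 1)) * ‖y‖^p.1 * ‖x‖^p.2 := this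
        _ = (1 / Real.Gamma (β * n + 1)) * (V^n * ((n.choose p.1 : ℝ) * ‖y‖^p.1 * ‖x‖^p.2)) := by
            ring
    calc ∑ p ∈ Finset.HasAntidiagonal.antidiagonal n, F p
        ≤ ∑ p ∈ Finset.HasAntidiagonal.antidiagonal n,
          (1 / Real.Gamma (β * n + 1)) * (V^n * ((n.choose p.1 : ℝ) * ‖y‖^p.1 * ‖x‖^p.2)) :=
          Finset.sum_le_sum h2
      _ = (1 / Real.Gamma (β * n + 1)) * (V^n *
            ∑ p ∈ Finset.HasAntidiagonal.antidiagonal n, (n.choose p.1 : ℝ) * ‖y‖^p.1 * ‖x‖^p.2) := by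
          rw [← Finset.mul_sum, ← Finset.mul_sum]
      _ = 1 / Real.Gamma (β * n + 1) * (V * (‖y‖ + ‖x‖))^n := by
          rw [Finset.Nat.sum_antidiagonal_eq_sum_range_succ_mk, mul_pow, add_pow]
          congr 2
          exact Finset.sum_congr rfl fun i _ => by ring
  refine Summable.of_nonneg_of_le (fun n => tsum_nonneg fun _ => norm_nonneg _) hfiber ?_
  exact summable_cr_mul_pow hβ (by positivity)

set_option maxHeartbeats 1000000 in
lemma hasSum_core (hβ : 0 < β) (w : ℕ → ℂ) {V : ℝ}
    (hw : ∀ m i : ℕ, i ≤ m → ‖w i‖ ≤ V ^ m) (x y : ℂ) :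
    HasSum (fun p : ℕ × ℕ => w p.1 * (((p.1+p.2).choose p.1 : ℕ) : ℂ) *
        mlCoeff β (p.1+p.2) * y^p.1 * x^p.2)
      (∑' m : ℕ, mlCoeff β m *
        ∑ i ∈ Finset.range (m+1), w i * (m.choose i : ℂ) * y^i * x^(m-i)) := by
  classical
  set G : ℕ × ℕ → ℂ := fun p => w p.1 * (((p.1+p.2).choose p.1 : ℕ) : ℂ) *
      mlCoeff β (p.1+p.2) * y^p.1 * x^p.2 with hG
  have hs : Summable G := (summable_norm_core hβ w hw x y).of_norm
  have hσ : Summable (fun z : (Σ n : ℕ, (Finset.HasAntidiagonal.antidiagonal n : Finset (ℕ × ℕ))) =>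
      G ((Finset.HasAntidiagonal.sigmaAntidiagonalEquivProd (A := ℕ)) z)) :=
    (Finset.HasAntidiagonal.sigmaAntidiagonalEquivProd (A := ℕ)).summable_iff.2 hs
  have hfib : ∀ n : ℕ, Summable (fun p : (Finset.HasAntidiagonal.antidiagonal n : Finset (ℕ × ℕ)) =>
      G ((Finset.HasAntidiagonal.sigmaAntidiagonalEquivProd (A := ℕ)) ⟨n, p⟩)) :=
    fun n => (hasSum_fintype _).summable
  have h1 : ∑' p : ℕ × ℕ, G p = ∑' n : ℕ, ∑' p : (Finset.HasAntidiagonal.antidiagonal n : Finset (ℕ × ℕ)),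
      G ((Finset.HasAntidiagonal.sigmaAntidiagonalEquivProd (A := ℕ)) ⟨n, p⟩) := by
    rw [← (Finset.HasAntidiagonal.sigmaAntidiagonalEquivProd (A := ℕ)).tsum_eq G, Summable.tsum_sigma' hfib hσ]
  have h2 : ∀ n : ℕ, (∑' p : (Finset.HasAntidiagonal.antidiagonal n : Finset (ℕ × ℕ)),
      G ((Finset.HasAntidiagonal.sigmaAntidiagonalEquivProd (A := ℕ)) ⟨n, p⟩))
      = mlCoeff β n * ∑ i ∈ Finset.range (n+1), w i * (n.choose i : ℂ) * y^i * x^(n-i) := by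
    intro n
    rw [tsum_fintype]
    rw [show (∑ p : (Finset.HasAntidiagonal.antidiagonal n : Finset (ℕ × ℕ)),
        G ((Finset.HasAntidiagonal.sigmaAntidiagonalEquivProd (A := ℕ)) ⟨n, p⟩))
        = ∑ p ∈ (Finset.HasAntidiagonal.antidiagonal n).attach, G ↑p from rfl]
    rw [Finset.sum_attach (Finset.HasAntidiagonal.antidiagonal n) G]
    rw [Finset.Nat.sum_antidiagonal_eq_sum_range_succ_mk, Finset.mul_sum]
    refine Finset.sum_congr rfl fun i hi => ?_
    have hin : i ≤ n := Nat.lt_succ_iff.1 (Finset.mem_range.1 hi)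
    have hsub : i + (n - i) = n := by omega
    rw [hG]
    simp only []
    rw [hsub]
    ring
  have hfinal : ∑' p : ℕ × ℕ, G p = ∑' m : ℕ, mlCoeff β m *
      ∑ i ∈ Finset.range (m+1), w i * (m.choose i : ℂ) * y^i * x^(m-i) :=
    h1.trans (tsum_congr h2)
  exact hfinal ▸ hs.hasSum

end core


lemma mittagLeffler_eq {β : ℝ} (z : ℂ) :
    mittagLeffler β z = ∑' m : ℕ, mlCoeff β m * z ^ m := by
  refine tsum_congr fun m => ?_
  rw [mlCoeff]
  ring

noncomputable def mlShift (β : ℝ) (x : ℂ) (k : ℕ) : ℂ :=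
  ∑' j : ℕ, (((k+j).choose k : ℕ) : ℂ) * mlCoeff β (k+j) * x^j

lemma hw_one : ∀ m i : ℕ, i ≤ m → ‖(1:ℂ)‖ ≤ (1:ℝ) ^ m := by
  intro m i _; simp

lemma row_tsum {β : ℝ} (hβ : 0 < β) (w : ℕ → ℂ) {V : ℝ}
    (hw : ∀ m i : ℕ, i ≤ m → ‖w i‖ ≤ V ^ m) (x y : ℂ) (k : ℕ) :
    ∑' j : ℕ, (w k * (((k+j).choose k : ℕ) : ℂ) * mlCoeff β (k+j) * y^k * x^j)
      = w k * y^k * mlShift β x k := by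
  have h1 : ∀ j : ℕ, w k * (((k+j).choose k : ℕ) : ℂ) * mlCoeff β (k+j) * y^k * x^j
      = (w k * y^k) * ((((k+j).choose k : ℕ) : ℂ) * mlCoeff β (k+j) * x^j) := fun j => by ring
  rw [tsum_congr h1, tsum_mul_left, mlShift]

lemma hasSum_rows {β : ℝ} (hβ : 0 < β) (w : ℕ → ℂ) {V : ℝ}
    (hw : ∀ m i : ℕ, i ≤ m → ‖w i‖ ≤ V ^ m) (x y : ℂ) :
    HasSum (fun k : ℕ => w k * y^k * mlShift β x k)
      (∑' m : ℕ, mlCoeff β m *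
        ∑ i ∈ Finset.range (m+1), w i * (m.choose i : ℂ) * y^i * x^(m-i)) := by
  have hs := (summable_norm_core hβ w hw x y).of_norm
  refine HasSum.prod_fiberwise (hasSum_core hβ w hw x y) fun k => ?_
  have := (hs.prod_factor k).hasSum
  rwa [row_tsum hβ w hw x y k] at this

lemma radius_top {β : ℝ} (hβ : 0 < β) (x : ℂ) :
    (FormalMultilinearSeries.ofScalars ℂ (mlShift β x)).radius = ⊤ := by
  apply ENNReal.eq_top_of_forall_nnreal_le
  intro r
  apply FormalMultilinearSeries.le_radius_of_summable
  have hnorm := summable_norm_core hβ (fun _ => (1:ℂ)) hw_one x ((r:ℝ):ℂ)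
  have hcol : Summable (fun k : ℕ => ∑' j : ℕ, ‖(1:ℂ) * (((k+j).choose k : ℕ) : ℂ) *
      mlCoeff β (k+j) * (((r:ℝ):ℂ))^k * x^j‖) :=
    ((summable_prod_of_nonneg (fun _ => norm_nonneg _)).1 hnorm).2
  refine Summable.of_nonneg_of_le (fun k => by positivity) (fun k => ?_) hcol
  rw [FormalMultilinearSeries.ofScalars_norm]
  have h1 : ‖mlShift β x k‖ * (r:ℝ)^k = ‖(1:ℂ) * (((r:ℝ):ℂ))^k * mlShift β x k‖ := by
    simp [norm_mul, norm_pow, mul_comm]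
  rw [h1, ← row_tsum hβ (fun _ => (1:ℂ)) hw_one x ((r:ℝ):ℂ) k]
  exact norm_tsum_le_tsum_norm (hnorm.prod_factor k)

lemma hasFPowerSeries_ml {β : ℝ} (hβ : 0 < β) (x : ℂ) :
    HasFPowerSeriesOnBall (mittagLeffler β)
      (FormalMultilinearSeries.ofScalars ℂ (mlShift β x)) x ⊤ := by
  refine ⟨le_of_eq (radius_top hβ x).symm, ENNReal.zero_lt_top, fun {y} _ => ?_⟩
  have h := hasSum_rows hβ (fun _ => (1:ℂ)) hw_one x y
  have hS : (∑' m : ℕ, mlCoeff β m *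
      ∑ i ∈ Finset.range (m+1), (1:ℂ) * (m.choose i : ℂ) * y^i * x^(m-i))
      = mittagLeffler β (x + y) := by
    rw [mittagLeffler_eq]
    refine tsum_congr fun m => ?_
    congr 1
    rw [add_comm x y, add_pow]
    refine Finset.sum_congr rfl fun i _ => by ring
  rw [hS] at h
  have hfe : (fun k : ℕ => (FormalMultilinearSeries.ofScalars ℂ (mlShift β x)) k fun _ => y)
      = fun k : ℕ => 1 * y^k * mlShift β x k := by
    funext k
    rw [FormalMultilinearSeries.ofScalars_apply_eq]
    simp [smul_eq_mul]
    ring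
  rw [hfe]
  exact h

lemma iteratedDeriv_ml {β : ℝ} (hβ : 0 < β) (x : ℂ) (k : ℕ) :
    iteratedDeriv k (mittagLeffler β) x = (k.factorial : ℂ) * mlShift β x k := by
  have h := hasFPowerSeries_ml hβ x
  have h2 := h.factorial_smul (1:ℂ) k
  rw [iteratedDeriv_eq_iteratedFDeriv, ← h2, FormalMultilinearSeries.ofScalars_apply_eq]
  simp [smul_eq_mul]

/-- Moments of the fractional Poisson measure:
`m_{λ,β}(n) = ∑ₖ kⁿ (λᵏ/k!) E_β⁽ᵏ⁾(−λ) = ∑_{m=0}^n m!/Γ(mβ+1) · S(n,m) λᵐ`. -/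
theorem fracPoisson_moments (β lam : ℝ) (hβ : 0 < β) (hβ1 : β ≤ 1) (hlam : 0 < lam) (n : ℕ) :
    ∑' k : ℕ, (k : ℂ) ^ n *
        ((lam : ℂ) ^ k / ((k).factorial : ℂ) * iteratedDeriv k (mittagLeffler β) (-(lam : ℂ)))
      = ∑ m ∈ Finset.range (n + 1),
          ((m).factorial : ℂ) / Complex.Gamma (((m : ℝ) * β + 1 : ℝ) : ℂ) *
            (stirling2 n m : ℂ) * (lam : ℂ) ^ m := by
  set x : ℂ := -(lam:ℂ) with hx
  have hw2 : ∀ m i : ℕ, i ≤ m → ‖((i:ℂ))^n‖ ≤ ((2:ℝ)^n) ^ m := by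
    intro m i him
    rw [norm_pow, Complex.norm_natCast]
    calc (i:ℝ)^n ≤ ((2:ℝ)^m)^n := by
          apply pow_le_pow_left₀ (Nat.cast_nonneg i)
          calc (i:ℝ) ≤ (m:ℝ) := by exact_mod_cast him
            _ ≤ (2:ℝ)^m := by exact_mod_cast (Nat.lt_two_pow_self (n := m)).le
      _ = ((2:ℝ)^n)^m := by rw [← pow_mul, ← pow_mul, Nat.mul_comm]
  have hrows := hasSum_rows hβ (fun k => (k:ℂ)^n) hw2 x (lam:ℂ)
  have hterm : ∀ k : ℕ, (k : ℂ) ^ n * ((lam : ℂ) ^ k / ((k).factorial : ℂ) *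
      iteratedDeriv k (mittagLeffler β) (-(lam : ℂ)))
      = (k:ℂ)^n * (lam:ℂ)^k * mlShift β x k := by
    intro k
    rw [← hx, iteratedDeriv_ml hβ x k]
    have hk : ((k).factorial : ℂ) ≠ 0 := Nat.cast_ne_zero.2 (Nat.factorial_ne_zero k)
    field_simp
  rw [tsum_congr hterm, hrows.tsum_eq]
  have hinner : ∀ m : ℕ, mlCoeff β m * ∑ i ∈ Finset.range (m+1),
      (i:ℂ)^n * (m.choose i : ℂ) * (lam:ℂ)^i * x^(m-i)
      = mlCoeff β m * ((stirling2 n m : ℂ) * (m.factorial : ℂ) * (lam:ℂ)^m) := by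
    intro m
    rw [← sum_pow_binom_neg n m (lam:ℂ)]
  rw [tsum_congr hinner]
  rw [tsum_eq_sum (s := Finset.range (n+1)) (fun m hm => by
    rw [stirling2_zero_of_lt (by simpa using Finset.mem_range.not.1 hm)]
    simp)]
  refine Finset.sum_congr rfl fun m _ => ?_
  rw [mlCoeff, show ((m:ℝ) * β + 1 : ℝ) = (β * (m:ℝ) + 1 : ℝ) from by ring]
  ring
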